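/- For every π, π' ∈ (S_n)^p and permutations: (1 − err(π, π'))² ≤ 1 − ‖M^π − M^{π'}‖_F² / (2np²), where M^π is the node alignment matrix of π and err is the misclassification proportion minimized over a global permutation. -/

import Mathlib

open Finset

/-- The node alignment matrix `M^π` of a `p`-tuple of permutations. -/
noncomputable def Mmat {n p : ℕ} (π : Fin p → Equiv.Perm (Fin n)) :
    Matrix (Fin n × Fin p) (Fin n × Fin p) ℝ :=
  fun x y => if π x.2 x.1 = π y.2 y.1 then 1 else 0

/-- Squared Frobenius norm of a matrix. -/
noncomputable def frobSq {ι κ : Type*} [Fintype ι] [Fintype κ]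
    (M : Matrix ι κ ℝ) : ℝ := ∑ i, ∑ j, (M i j) ^ 2

/-- Misclassification proportion between two `p`-tuples of permutations,
minimized over a global relabeling. -/
noncomputable def errPerm {n p : ℕ} (π π' : Fin p → Equiv.Perm (Fin n)) : ℝ :=
  ⨅ ψ : Equiv.Perm (Fin n),
    (1 / ((n : ℝ) * p)) * ∑ j : Fin p,
      ((Finset.univ.filter (fun u : Fin n => ψ (π j u) ≠ π' j u)).card : ℝ)

theorem err_vs_alignment_matrix_distance
    (n p : ℕ) (hn : 0 < n) (hp : 0 < p)
    (π π' : Fin p → Equiv.Perm (Fin n)) :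
    (1 - errPerm π π') ^ 2 ≤
      1 - frobSq (Mmat π - Mmat π') / (2 * n * (p : ℝ) ^ 2) := by
  have hn' : (0:ℝ) < n := by exact_mod_cast hn
  have hp' : (0:ℝ) < p := by exact_mod_cast hp
  set T : ℝ := ∑ x : Fin n × Fin p, ∑ y : Fin n × Fin p, Mmat π x y * Mmat π' x y with hT
  -- total mass of an alignment matrix
  have hsum : ∀ σ : Fin p → Equiv.Perm (Fin n),
      ∑ x : Fin n × Fin p, ∑ y : Fin n × Fin p, Mmat σ x y = n * (p:ℝ)^2 := by
    intro σ
    have h1 : ∀ c : Fin n, ∑ y : Fin n × Fin p,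
        (if c = σ y.2 y.1 then (1:ℝ) else 0) = p := by
      intro c
      rw [Fintype.sum_prod_type, Finset.sum_comm]
      have h2 : ∀ j : Fin p, ∑ u : Fin n, (if c = σ j u then (1:ℝ) else 0) = 1 := by
        intro j
        simp only [← Equiv.symm_apply_eq]
        simp [Finset.sum_ite_eq]
      simp [h2]
    have : ∀ x : Fin n × Fin p, ∑ y : Fin n × Fin p, Mmat σ x y = p := by
      intro x
      simpa only [Mmat] using h1 (σ x.2 x.1)
    rw [Finset.sum_congr rfl (fun x _ => this x)]
    simp [Finset.card_univ]
    ring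
  -- Frobenius norm identity
  have hfrob : frobSq (Mmat π - Mmat π') = 2 * ((n:ℝ) * p^2) - 2 * T := by
    unfold frobSq
    have hpt : ∀ x y : Fin n × Fin p, ((Mmat π - Mmat π') x y)^2
        = Mmat π x y + Mmat π' x y - 2 * (Mmat π x y * Mmat π' x y) := by
      intro x y
      simp only [Matrix.sub_apply, Mmat]
      split_ifs <;> ring
    calc ∑ x : Fin n × Fin p, ∑ y : Fin n × Fin p, ((Mmat π - Mmat π') x y)^2
        = ∑ x : Fin n × Fin p, ∑ y : Fin n × Fin p,
            (Mmat π x y + Mmat π' x y - 2 * (Mmat π x y * Mmat π' x y)) := by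
          exact Finset.sum_congr rfl fun x _ => Finset.sum_congr rfl fun y _ => hpt x y
      _ = (∑ x : Fin n × Fin p, ∑ y : Fin n × Fin p, Mmat π x y)
          + (∑ x : Fin n × Fin p, ∑ y : Fin n × Fin p, Mmat π' x y)
          - 2 * T := by
          rw [hT]
          simp only [Finset.sum_sub_distrib, Finset.sum_add_distrib, Finset.mul_sum]
      _ = 2 * ((n:ℝ) * p^2) - 2 * T := by rw [hsum π, hsum π']; ring
  -- minimizer of errPerm
  obtain ⟨ψ₀, hψ₀⟩ := Finite.exists_min (fun ψ : Equiv.Perm (Fin n) =>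
      (1 / ((n : ℝ) * p)) * ∑ j : Fin p,
        ((Finset.univ.filter (fun u : Fin n => ψ (π j u) ≠ π' j u)).card : ℝ))
  have herr : errPerm π π' = (1 / ((n : ℝ) * p)) * ∑ j : Fin p,
      ((Finset.univ.filter (fun u : Fin n => ψ₀ (π j u) ≠ π' j u)).card : ℝ) :=
    le_antisymm (ciInf_le (Finite.bddBelow_range _) ψ₀) (le_ciInf hψ₀)
  set a : ℝ := ∑ x : Fin n × Fin p,
      (if ψ₀ (π x.2 x.1) = π' x.2 x.1 then (1:ℝ) else 0) with ha
  -- 1 - err = a / (n p)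
  have h1err : 1 - errPerm π π' = a / ((n:ℝ) * p) := by
    rw [herr]
    have hm : ∑ j : Fin p,
        ((Finset.univ.filter (fun u : Fin n => ψ₀ (π j u) ≠ π' j u)).card : ℝ)
        = (n:ℝ) * p - a := by
      have : ∀ j : Fin p,
          ((Finset.univ.filter (fun u : Fin n => ψ₀ (π j u) ≠ π' j u)).card : ℝ)
          = ∑ u : Fin n, (if ψ₀ (π j u) ≠ π' j u then (1:ℝ) else 0) :=
        fun j => (Finset.sum_boole _ _).symm
      rw [Finset.sum_congr rfl (fun j _ => this j)]
      have hswap : ∑ j : Fin p, ∑ u : Fin n, (if ψ₀ (π j u) ≠ π' j u then (1:ℝ) else 0)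
          = ∑ x : Fin n × Fin p, (if ψ₀ (π x.2 x.1) ≠ π' x.2 x.1 then (1:ℝ) else 0) := by
        rw [Fintype.sum_prod_type, Finset.sum_comm]
      rw [hswap, ha]
      have : ∀ x : Fin n × Fin p, (if ψ₀ (π x.2 x.1) ≠ π' x.2 x.1 then (1:ℝ) else 0)
          = 1 - (if ψ₀ (π x.2 x.1) = π' x.2 x.1 then (1:ℝ) else 0) := by
        intro x; by_cases h : ψ₀ (π x.2 x.1) = π' x.2 x.1 <;> simp [h]
      rw [Finset.sum_congr rfl (fun x _ => this x)]
      simp [Finset.sum_sub_distrib, Finset.card_univ]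
    rw [hm]
    field_simp
    ring
  -- fiber counts
  set f : Fin n → ℝ := fun v => ∑ x : Fin n × Fin p,
      (if ψ₀ (π x.2 x.1) = π' x.2 x.1 ∧ π x.2 x.1 = v then (1:ℝ) else 0) with hf
  have hfa : ∑ v : Fin n, f v = a := by
    rw [hf, ha, Finset.sum_comm]
    refine Finset.sum_congr rfl fun x _ => ?_
    by_cases h : ψ₀ (π x.2 x.1) = π' x.2 x.1 <;> simp [h]
  have hCS : a^2 ≤ (n:ℝ) * ∑ v : Fin n, (f v)^2 := by
    rw [← hfa]
    have := sq_sum_le_card_mul_sum_sq (s := (Finset.univ : Finset (Fin n))) (f := f)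
    simpa [Finset.card_univ] using this
  -- key counting bound
  have hfT : ∑ v : Fin n, (f v)^2 ≤ T := by
    have hexp : ∑ v : Fin n, (f v)^2
        = ∑ x : Fin n × Fin p, ∑ y : Fin n × Fin p, ∑ v : Fin n,
            (if ψ₀ (π x.2 x.1) = π' x.2 x.1 ∧ π x.2 x.1 = v then (1:ℝ) else 0)
          * (if ψ₀ (π y.2 y.1) = π' y.2 y.1 ∧ π y.2 y.1 = v then (1:ℝ) else 0) := by
      have : ∀ v : Fin n, (f v)^2 = ∑ x : Fin n × Fin p, ∑ y : Fin n × Fin p,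
          (if ψ₀ (π x.2 x.1) = π' x.2 x.1 ∧ π x.2 x.1 = v then (1:ℝ) else 0)
          * (if ψ₀ (π y.2 y.1) = π' y.2 y.1 ∧ π y.2 y.1 = v then (1:ℝ) else 0) := by
        intro v; rw [hf, sq, Finset.sum_mul_sum]
      rw [Finset.sum_congr rfl (fun v _ => this v), Finset.sum_comm]
      exact Finset.sum_congr rfl fun x _ => Finset.sum_comm
    rw [hexp, hT]
    refine Finset.sum_le_sum fun x _ => Finset.sum_le_sum fun y _ => ?_
    by_cases h1 : ψ₀ (π x.2 x.1) = π' x.2 x.1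
    · by_cases h2 : ψ₀ (π y.2 y.1) = π' y.2 y.1
      · by_cases h3 : π x.2 x.1 = π y.2 y.1
        · have h4 : π' x.2 x.1 = π' y.2 y.1 := by rw [← h1, ← h2, h3]
          have hM : Mmat π x y * Mmat π' x y = 1 := by simp [Mmat, h3, h4]
          rw [hM]
          refine le_of_eq ?_
          calc ∑ v : Fin n,
              (if ψ₀ (π x.2 x.1) = π' x.2 x.1 ∧ π x.2 x.1 = v then (1:ℝ) else 0)
              * (if ψ₀ (π y.2 y.1) = π' y.2 y.1 ∧ π y.2 y.1 = v then (1:ℝ) else 0)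
              = ∑ v : Fin n, (if π x.2 x.1 = v then (1:ℝ) else 0) := by
                refine Finset.sum_congr rfl fun v _ => ?_
                by_cases h5 : π x.2 x.1 = v
                · subst h5
                  simp [h1, h2, h3.symm, h4]
                · have h6 : ¬ π y.2 y.1 = v := fun hc => h5 (h3.trans hc)
                  simp [h5, h6]
            _ = 1 := by simp
        · have hsum0 : ∀ v : Fin n,
              (if ψ₀ (π x.2 x.1) = π' x.2 x.1 ∧ π x.2 x.1 = v then (1:ℝ) else 0)
              * (if ψ₀ (π y.2 y.1) = π' y.2 y.1 ∧ π y.2 y.1 = v then (1:ℝ) else 0) = 0 := by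
            intro v
            by_cases h5 : π x.2 x.1 = v
            · have : ¬ (π y.2 y.1 = v) := fun hc => h3 (h5.trans hc.symm)
              simp [this]
            · simp [h5]
          rw [Finset.sum_congr rfl (fun v _ => hsum0 v)]
          simp [Mmat]
          positivity
      · simp only [h2, false_and, if_false, mul_zero, Finset.sum_const_zero]
        have : (0:ℝ) ≤ Mmat π x y * Mmat π' x y := by
          simp only [Mmat]; split_ifs <;> norm_num
        exact this
    · simp only [h1, false_and, if_false, zero_mul, Finset.sum_const_zero]
      have : (0:ℝ) ≤ Mmat π x y * Mmat π' x y := by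
        simp only [Mmat]; split_ifs <;> norm_num
      exact this
  -- combine
  have key : (1 - errPerm π π')^2 ≤ T / ((n:ℝ) * p^2) := by
    rw [h1err, div_pow]
    rw [div_le_div_iff₀ (by positivity) (by positivity)]
    have h2 : a^2 ≤ (n:ℝ) * T := le_trans hCS (by nlinarith [hfT])
    nlinarith [h2, hp', hn']
  have hq : 1 - frobSq (Mmat π - Mmat π') / (2 * n * (p : ℝ) ^ 2)
      = T / ((n:ℝ) * p^2) := by
    rw [hfrob]
    field_simp
    ring
  rw [hq]
  exact key
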